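/- For all λ₁, λ₂ > 0, c > 0 and r ≥ 0, ∫_{r/c}^{∞} ( exp(−π λ₁ r²) − exp(−π λ₁ c² s²) ) · 2 λ₂ exp(−2 λ₂ s) ds = ∫_{r}^{∞} 2π λ₁ t · exp( −π λ₁ t² − (2 λ₂ / c) t ) dt. -/

import Mathlib

open MeasureTheory Real Filter Set

/-- The integral identity from the proof of Lemma 3: for `λ₁, λ₂, c > 0` and `r ≥ 0`,
`∫_{ r/c }^∞ (e^{−π λ₁ r²} − e^{−π λ₁ c² s²}) · 2 λ₂ e^{−2 λ₂ s} ds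
  = ∫_r^∞ 2π λ₁ t e^{−π λ₁ t² − (2 λ₂ / c) t} dt`. -/
theorem integral_identity_serving_distance (lam₁ lam₂ c r : ℝ)
    (hlam₁ : 0 < lam₁) (hlam₂ : 0 < lam₂) (hc : 0 < c) (hr : 0 ≤ r) :
    (∫ s in Set.Ioi (r / c),
        (Real.exp (-(π * lam₁ * r ^ 2)) - Real.exp (-(π * lam₁ * c ^ 2 * s ^ 2))) *
          (2 * lam₂ * Real.exp (-(2 * lam₂ * s))))
      = ∫ t in Set.Ioi r,
          2 * π * lam₁ * t * Real.exp (-(π * lam₁ * t ^ 2) - (2 * lam₂ / c) * t) := by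
  have hπ := Real.pi_pos
  set a : ℝ := π * lam₁ * c ^ 2 with ha_def
  have ha : 0 < a := by positivity
  set b : ℝ := 2 * lam₂ with hb_def
  have hb : 0 < b := by positivity
  set A : ℝ := Real.exp (-(π * lam₁ * r ^ 2)) with hA_def
  have hrc : 0 ≤ r / c := div_nonneg hr hc.le
  set h : ℝ → ℝ := fun s => 2 * a * s * Real.exp (-(a * s ^ 2) - b * s) with hh_def
  set L : ℝ → ℝ := fun s => (A - Real.exp (-(a * s ^ 2))) * (b * Real.exp (-(b * s)))
    with hL_def
  set g : ℝ → ℝ := fun s => (A - Real.exp (-(a * s ^ 2))) * Real.exp (-(b * s)) with hg_def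
  set g' : ℝ → ℝ := fun s =>
      2 * a * s * Real.exp (-(a * s ^ 2)) * Real.exp (-(b * s))
        - b * (A - Real.exp (-(a * s ^ 2))) * Real.exp (-(b * s)) with hg'_def
  -- pointwise identity:  L = h - g'
  have hpt : ∀ s : ℝ, L s = h s - g' s := by
    intro s
    simp only [hL_def, hh_def, hg'_def, sub_eq_add_neg, Real.exp_add]
    ring
  -- integrability of h
  have hint_h : IntegrableOn h (Set.Ioi (r / c)) := by
    have hmaj : Integrable (fun s : ℝ => 2 * a * (s * Real.exp (-a * s ^ 2)))
        (volume.restrict (Set.Ioi (r / c))) :=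
      ((integrable_mul_exp_neg_mul_sq ha).const_mul (2 * a)).restrict
    refine hmaj.mono' ?_ ?_
    · exact (Continuous.aestronglyMeasurable (by fun_prop)).restrict
    · filter_upwards [ae_restrict_mem measurableSet_Ioi] with s hs
      have hs0 : 0 ≤ s := le_trans hrc (le_of_lt hs)
      have h1 : Real.exp (-(a * s ^ 2) - b * s) ≤ Real.exp (-(a * s ^ 2)) :=
        Real.exp_le_exp.2 (by nlinarith [mul_nonneg hb.le hs0])
      have h2 : 0 ≤ 2 * a * s := by positivity
      simp only [hh_def]
      rw [Real.norm_eq_abs, abs_of_nonneg (mul_nonneg h2 (Real.exp_pos _).le)]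
      calc 2 * a * s * Real.exp (-(a * s ^ 2) - b * s)
          ≤ 2 * a * s * Real.exp (-(a * s ^ 2)) := by nlinarith [Real.exp_pos (-(a*s^2))]
        _ = 2 * a * (s * Real.exp (-a * s ^ 2)) := by ring_nf
  -- integrability of L
  have hint_L : IntegrableOn L (Set.Ioi (r / c)) := by
    have hmaj : IntegrableOn (fun s : ℝ => b * Real.exp (-b * s)) (Set.Ioi (r / c)) :=
      (exp_neg_integrableOn_Ioi (r / c) hb).const_mul b
    refine hmaj.mono' ?_ ?_
    · exact (Continuous.aestronglyMeasurable (by fun_prop)).restrict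
    · filter_upwards with s
      have e1 : Real.exp (-(π * lam₁ * r ^ 2)) ≤ 1 := Real.exp_le_one_iff.2 (neg_nonpos.mpr (by positivity))
      have e2 : Real.exp (-(a * s ^ 2)) ≤ 1 := Real.exp_le_one_iff.2 (neg_nonpos.mpr (by positivity))
      have e3 := Real.exp_pos (-(π * lam₁ * r ^ 2))
      have e4 := Real.exp_pos (-(a * s ^ 2))
      have e5 := Real.exp_pos (-(b * s))
      simp only [hL_def]
      rw [Real.norm_eq_abs, abs_mul]
      rw [abs_of_nonneg (by positivity : (0:ℝ) ≤ b * Real.exp (-(b * s)))]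
      have : |A - Real.exp (-(a * s ^ 2))| ≤ 1 := by
        rw [abs_sub_le_iff]; constructor <;> simp only [hA_def] <;> linarith
      calc |A - Real.exp (-(a * s ^ 2))| * (b * Real.exp (-(b * s)))
          ≤ 1 * (b * Real.exp (-(b * s))) := by
            exact mul_le_mul_of_nonneg_right this (by positivity)
        _ = b * Real.exp (-b * s) := by rw [one_mul, neg_mul]
  have hint_g' : IntegrableOn g' (Set.Ioi (r / c)) := by
    have : g' = fun s => h s - L s := by
      funext s; have := hpt s; linarith
    rw [this]; exact hint_h.sub hint_L
  -- derivative of g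
  have hderiv : ∀ s : ℝ, HasDerivAt g (g' s) s := by
    intro s
    have d1 : HasDerivAt (fun s : ℝ => -(a * s ^ 2)) (-(a * (2 * s))) s := by
      exact (((hasDerivAt_pow 2 s).const_mul a).neg).congr_deriv (by norm_num)
    have d2 := (hasDerivAt_const s A).sub d1.exp
    have d3 : HasDerivAt (fun s : ℝ => -(b * s)) (-b) s := by
      exact ((hasDerivAt_id s).const_mul b).neg.congr_deriv (by simp)
    have := d2.mul d3.exp
    refine this.congr_deriv ?_
    simp only [hg'_def, Pi.sub_apply]
    ring
  -- g tends to 0 at top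
  have htend : Tendsto g atTop (nhds 0) := by
    have t1 : Tendsto (fun s : ℝ => -(a * s ^ 2)) atTop atBot := by
      apply Filter.tendsto_neg_atTop_atBot.comp
      exact (tendsto_pow_atTop two_ne_zero).const_mul_atTop ha
    have t2 : Tendsto (fun s : ℝ => Real.exp (-(a * s ^ 2))) atTop (nhds 0) :=
      Real.tendsto_exp_atBot.comp t1
    have t3 : Tendsto (fun s : ℝ => -(b * s)) atTop atBot := by
      apply Filter.tendsto_neg_atTop_atBot.comp
      exact (tendsto_id.const_mul_atTop hb)
    have t4 : Tendsto (fun s : ℝ => Real.exp (-(b * s))) atTop (nhds 0) :=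
      Real.tendsto_exp_atBot.comp t3
    have : Tendsto g atTop (nhds ((A - 0) * 0)) :=
      (((tendsto_const_nhds (x := A)).sub t2).mul t4)
    simpa using this
  -- g (r/c) = 0
  have hg0 : g (r / c) = 0 := by
    have : a * (r / c) ^ 2 = π * lam₁ * r ^ 2 := by
      field_simp [ha_def]; ring
    simp [hg_def, this, hA_def]
  -- integral of g' over Ioi (r/c) is 0
  have hintg' : ∫ s in Set.Ioi (r / c), g' s = 0 := by
    have := integral_Ioi_of_hasDerivAt_of_tendsto
      (f := g) (f' := g') (a := r / c) (m := 0)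
      ((hderiv (r / c)).continuousAt.continuousWithinAt)
      (fun x _ => hderiv x) hint_g' htend
    rw [this, hg0, sub_zero]
  -- LHS = ∫ h
  have hLHS : (∫ s in Set.Ioi (r / c),
      (Real.exp (-(π * lam₁ * r ^ 2)) - Real.exp (-(π * lam₁ * c ^ 2 * s ^ 2))) *
        (2 * lam₂ * Real.exp (-(2 * lam₂ * s)))) = ∫ s in Set.Ioi (r / c), h s := by
    have : ∀ s : ℝ, (Real.exp (-(π * lam₁ * r ^ 2)) - Real.exp (-(π * lam₁ * c ^ 2 * s ^ 2))) *
        (2 * lam₂ * Real.exp (-(2 * lam₂ * s))) = h s - g' s := by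
      intro s
      rw [← hpt s]
    simp_rw [this]
    rw [integral_sub hint_h hint_g', hintg', sub_zero]
  -- RHS = ∫ h  via substitution t = c s
  have hRHS : (∫ t in Set.Ioi r,
      2 * π * lam₁ * t * Real.exp (-(π * lam₁ * t ^ 2) - (2 * lam₂ / c) * t))
      = ∫ s in Set.Ioi (r / c), h s := by
    have hsub := integral_comp_mul_left_Ioi
      (fun t => 2 * π * lam₁ * t * Real.exp (-(π * lam₁ * t ^ 2) - (2 * lam₂ / c) * t))
      (r / c) hc
    rw [mul_div_cancel₀ r hc.ne'] at hsub
    have heq : ∀ s : ℝ, (2 * π * lam₁ * (c * s) *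
        Real.exp (-(π * lam₁ * (c * s) ^ 2) - (2 * lam₂ / c) * (c * s))) = c⁻¹ * h s := by
      intro s
      have hbs : (2 * lam₂ / c) * (c * s) = b * s := by
        rw [hb_def]; field_simp
      rw [hbs]
      simp only [hh_def, ha_def]
      field_simp
    simp_rw [heq] at hsub
    rw [integral_const_mul, smul_eq_mul] at hsub
    exact (mul_left_cancel₀ (inv_ne_zero hc.ne') hsub).symm
  rw [hLHS, hRHS]
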